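/- The partial derivative of the rate functional with respect to a single kernel entry: fix a matrix q : 𝒳 × 𝒳̂ → ℝ with all entries positive and a coordinate (x₀, x̂₀). Then the real function t ↦ F(q[(x₀,x̂₀) ↦ t]), obtained from F by replacing the entry q(x₀,x̂₀) with t, has derivative at the point t = q(x₀,x̂₀) equal to pX(x₀) · log( q(x₀,x̂₀) / pq(x̂₀) ). -/

import Mathlib

/-- Partial derivative of the rate functional
`F(q) = Σ_{x,x̂} pX(x)·q(x,x̂)·log(q(x,x̂)/pq(x̂))`, where `pq(x̂) = Σ_x pX(x)·q(x,x̂)`,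
with respect to the single kernel entry `q(x₀,x̂₀)`:
the function `t ↦ F(q[(x₀,x̂₀) ↦ t])` has derivative `pX(x₀)·log(q(x₀,x̂₀)/pq(x̂₀))`
at the point `t = q(x₀,x̂₀)`. -/
theorem rate_functional_partial_derivative
    {𝒳 𝒳h : Type*} [Fintype 𝒳] [Fintype 𝒳h] [Nonempty 𝒳] [Nonempty 𝒳h]
    [DecidableEq 𝒳] [DecidableEq 𝒳h]
    (pX : 𝒳 → ℝ) (hpXpos : ∀ x, 0 < pX x) (hpXsum : ∑ x, pX x = 1)
    (q : 𝒳 × 𝒳h → ℝ) (hqpos : ∀ x xh, 0 < q (x, xh))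
    (x₀ : 𝒳) (xh₀ : 𝒳h) :
    HasDerivAt
      (fun t : ℝ =>
        ∑ x, ∑ xh, pX x * Function.update q (x₀, xh₀) t (x, xh) *
          Real.log (Function.update q (x₀, xh₀) t (x, xh) /
            ∑ x', pX x' * Function.update q (x₀, xh₀) t (x', xh)))
      (pX x₀ * Real.log (q (x₀, xh₀) / ∑ x', pX x' * q (x', xh₀)))
      (q (x₀, xh₀)) := by
  have hpq : ∀ xh, 0 < ∑ x', pX x' * q (x', xh) := fun xh =>
    Finset.sum_pos (fun x _ => mul_pos (hpXpos x) (hqpos x xh)) Finset.univ_nonempty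
  have hA : ∀ x xh, HasDerivAt (fun t => Function.update q (x₀, xh₀) t (x, xh))
      (if (x, xh) = (x₀, xh₀) then (1:ℝ) else 0) (q (x₀, xh₀)) := by
    intro x xh
    by_cases h : (x, xh) = (x₀, xh₀)
    · rw [if_pos h, show (fun t => Function.update q (x₀, xh₀) t (x, xh)) = fun t : ℝ => t from
        funext fun t => by rw [h, Function.update_self]]
      exact hasDerivAt_id _
    · simp only [Function.update_of_ne h, if_neg h]
      exact hasDerivAt_const _ _
  have hS : ∀ xh, HasDerivAt (fun t => ∑ x', pX x' * Function.update q (x₀, xh₀) t (x', xh))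
      (if xh = xh₀ then pX x₀ else 0) (q (x₀, xh₀)) := by
    intro xh
    have h := HasDerivAt.fun_sum (fun x' (_ : x' ∈ Finset.univ) => (hA x' xh).const_mul (pX x'))
    convert h using 1
    · rfl
    · rfl
    by_cases hxh : xh = xh₀
    · subst hxh; simp [Prod.ext_iff]
    · simp [Prod.ext_iff, hxh]
  have hSne : ∀ xh, (fun t => ∑ x', pX x' * Function.update q (x₀, xh₀) t (x', xh)) (q (x₀, xh₀)) ≠ 0 := by
    intro xh
    simp only [Function.update_eq_self]
    exact (hpq xh).ne'
  have hne : ∀ x xh, (fun t => Function.update q (x₀, xh₀) t (x, xh) /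
      ∑ x', pX x' * Function.update q (x₀, xh₀) t (x', xh)) (q (x₀, xh₀)) ≠ 0 := by
    intro x xh
    simp only [Function.update_eq_self]
    exact (div_pos (hqpos x xh) (hpq xh)).ne'
  have key : ∀ x xh, HasDerivAt (fun t =>
      pX x * Function.update q (x₀, xh₀) t (x, xh) *
        Real.log (Function.update q (x₀, xh₀) t (x, xh) /
          ∑ x', pX x' * Function.update q (x₀, xh₀) t (x', xh)))
      ((if x = x₀ ∧ xh = xh₀ then
          pX x₀ * (Real.log (q (x₀, xh₀) / ∑ x', pX x' * q (x', xh₀)) + 1) else 0)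
        - (if xh = xh₀ then pX x * q (x, xh₀) * pX x₀ / ∑ x', pX x' * q (x', xh₀) else 0))
      (q (x₀, xh₀)) := by
    intro x xh
    have h := ((hA x xh).const_mul (pX x)).mul
      (((hA x xh).div (hS xh) (hSne xh)).log (hne x xh))
    convert h using 1
    · rfl
    · rfl
    · rfl
    simp only [Pi.div_apply, Function.update_eq_self]
    by_cases hxh : xh = xh₀
    · subst hxh
      by_cases hx : x = x₀
      · subst hx
        simp only [if_pos rfl, if_pos (And.intro rfl rfl), and_self, if_true]
        have hq := (hqpos x xh).ne'
        have hP := (hpq xh).ne'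
        field_simp
        ring
      · simp only [Prod.mk.injEq, hx, false_and, if_false, and_true, if_neg hx, if_pos rfl, if_true]
        have hq := (hqpos x xh).ne'
        have hP := (hpq xh).ne'
        field_simp
        ring
    · have h1 : ¬ ((x, xh) = (x₀, xh₀)) := by simp [Prod.ext_iff, hxh]
      simp only [if_neg h1, if_neg hxh, if_neg (by simp [hxh] : ¬(x = x₀ ∧ xh = xh₀))]
      ring
  have total := HasDerivAt.fun_sum (fun x (_ : x ∈ Finset.univ) =>
    HasDerivAt.fun_sum (fun xh (_ : xh ∈ Finset.univ) => key x xh))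
  convert total using 1
  · rfl
  · rfl
  rw [eq_comm]
  have hP := (hpq xh₀).ne'
  simp only [Finset.sum_sub_distrib, ite_and, Finset.sum_ite_irrel, Finset.sum_ite_eq',
    Finset.mem_univ, if_true, Finset.sum_const_zero]
  rw [← Finset.sum_div, ← Finset.sum_mul]
  field_simp
  ring
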